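/- For any bounded function f : E^n → ℝ on a measurable space E and any finite counting measure η = δ_{x_1}+...+δ_{x_m}, the integral of f against the product measure η^{⊗n} equals the sum over set partitions σ of {1,...,n} of the integral of f_σ against the factorial measure η^(|σ|), where f_σ : E^{|σ|} → ℝ is obtained from f by identifying arguments in the same block of σ. -/

import Mathlib

attribute [local instance] Classical.propDecidable

/-- The set partitions of `Fin n`, encoded as finsets of nonempty, pairwise disjoint blocks
covering `Fin n` (each element lies in exactly one block). -/
noncomputable def SetPartitions (n : ℕ) : Finset (Finset (Finset (Fin n))) :=
  Finset.univ.filter (fun P => (∅ ∉ P) ∧ ∀ k : Fin n, ∃! A, A ∈ P ∧ k ∈ A)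

/-- for a finite counting measure `η = δ_{x 0} + ⋯ + δ_{x (m-1)}` and any
`f : E^n → ℝ`, the integral `∫ f dη^{⊗ n}` (the sum of `f(x∘i)` over all index tuples `i`)
equals the sum, over set partitions `P` of `{1,…,n}`, of `∫ f_P dη^{(|P|)}`: the inner sum
runs over maps `g` whose kernel is exactly `P` (i.e. `g` assigns pairwise distinct point
indices to the blocks of `P`), which encodes integrating the identified function `f_P`
against the `|P|`-th factorial measure. -/
theorem stmt7 {E : Type*} (m n : ℕ) (x : Fin m → E) (f : (Fin n → E) → ℝ) :
    ∑ i : Fin n → Fin m, f (x ∘ i)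
      = ∑ P ∈ SetPartitions n,
          ∑ g ∈ Finset.univ.filter
              (fun g : Fin n → Fin m => ∀ k l, g k = g l ↔ ∃ A ∈ P, k ∈ A ∧ l ∈ A),
            f (x ∘ g) := by
  classical
  set ker : (Fin n → Fin m) → Finset (Finset (Fin n)) :=
    fun g => Finset.univ.image (fun k => Finset.univ.filter (fun l => g l = g k)) with hker
  have hcond : ∀ g : Fin n → Fin m, ∀ k l, g k = g l ↔ ∃ A ∈ ker g, k ∈ A ∧ l ∈ A := by
    intro g k l
    constructor
    · intro h
      exact ⟨Finset.univ.filter (fun j => g j = g k),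
        Finset.mem_image_of_mem _ (Finset.mem_univ k), by simp, by simp [h.symm]⟩
    · rintro ⟨A, hA, hk, hl⟩
      obtain ⟨j, -, rfl⟩ := Finset.mem_image.mp hA
      simp only [Finset.mem_filter, Finset.mem_univ, true_and] at hk hl
      rw [hk, hl]
  have hmem : ∀ g : Fin n → Fin m, ker g ∈ SetPartitions n := by
    intro g
    simp only [SetPartitions, Finset.mem_filter, Finset.mem_univ, true_and]
    refine ⟨?_, ?_⟩
    · intro h
      obtain ⟨j, -, hj⟩ := Finset.mem_image.mp h
      have hjmem : j ∈ Finset.univ.filter (fun l => g l = g j) := by simp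
      rw [hj] at hjmem
      exact absurd hjmem (Finset.notMem_empty j)
    · intro k
      refine ⟨Finset.univ.filter (fun l => g l = g k),
        ⟨Finset.mem_image_of_mem _ (Finset.mem_univ k), by simp⟩, ?_⟩
      rintro A ⟨hA, hkA⟩
      obtain ⟨j, -, rfl⟩ := Finset.mem_image.mp hA
      simp only [Finset.mem_filter, Finset.mem_univ, true_and] at hkA
      ext l
      simp only [Finset.mem_filter, Finset.mem_univ, true_and]
      rw [hkA]
  have huniq : ∀ (g : Fin n → Fin m) (P : Finset (Finset (Fin n))),
      P ∈ SetPartitions n →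
      (∀ k l, g k = g l ↔ ∃ A ∈ P, k ∈ A ∧ l ∈ A) → P = ker g := by
    intro g P hP hC
    simp only [SetPartitions, Finset.mem_filter, Finset.mem_univ, true_and] at hP
    obtain ⟨hne, hu⟩ := hP
    ext A
    constructor
    · intro hA
      have hAne : A.Nonempty := Finset.nonempty_iff_ne_empty.mpr (fun h => hne (h ▸ hA))
      obtain ⟨k, hk⟩ := hAne
      have hAeq : A = Finset.univ.filter (fun l => g l = g k) := by
        ext l
        simp only [Finset.mem_filter, Finset.mem_univ, true_and]
        constructor
        · intro hl
          exact (hC l k).mpr ⟨A, hA, hl, hk⟩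
        · intro hl
          obtain ⟨B, hB, hlB, hkB⟩ := (hC l k).mp hl
          obtain ⟨C, -, hCuniq⟩ := hu k
          have h1 := hCuniq A ⟨hA, hk⟩
          have h2 := hCuniq B ⟨hB, hkB⟩
          rw [h1, ← h2]
          exact hlB
      rw [hAeq]
      exact Finset.mem_image_of_mem _ (Finset.mem_univ k)
    · intro hA
      obtain ⟨k, -, rfl⟩ := Finset.mem_image.mp hA
      obtain ⟨B, ⟨hB, hkB⟩, hBuniq⟩ := hu k
      have heq : Finset.univ.filter (fun l => g l = g k) = B := by
        ext l
        simp only [Finset.mem_filter, Finset.mem_univ, true_and]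
        constructor
        · intro hl
          obtain ⟨C, hCmem, hlC, hkC⟩ := (hC l k).mp hl
          rw [hBuniq C ⟨hCmem, hkC⟩] at hlC
          exact hlC
        · intro hl
          exact (hC l k).mpr ⟨B, hB, hl, hkB⟩
      rw [heq]
      exact hB
  calc ∑ i : Fin n → Fin m, f (x ∘ i)
      = ∑ g : Fin n → Fin m, ∑ P ∈ SetPartitions n,
          if (∀ k l, g k = g l ↔ ∃ A ∈ P, k ∈ A ∧ l ∈ A) then f (x ∘ g) else 0 := by
        refine Finset.sum_congr rfl fun g _ => ?_
        rw [Finset.sum_eq_single (ker g)]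
        · rw [if_pos (hcond g)]
        · intro P hP hPne
          rw [if_neg]
          intro hC
          exact hPne (huniq g P hP hC)
        · intro h
          exact absurd (hmem g) h
    _ = ∑ P ∈ SetPartitions n, ∑ g : Fin n → Fin m,
          if (∀ k l, g k = g l ↔ ∃ A ∈ P, k ∈ A ∧ l ∈ A) then f (x ∘ g) else 0 :=
        Finset.sum_comm
    _ = ∑ P ∈ SetPartitions n,
          ∑ g ∈ Finset.univ.filter
              (fun g : Fin n → Fin m => ∀ k l, g k = g l ↔ ∃ A ∈ P, k ∈ A ∧ l ∈ A),
            f (x ∘ g) := by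
        refine Finset.sum_congr rfl fun P _ => ?_
        rw [Finset.sum_filter]
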